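/- arXiv:1307.2786 — 2 statements merged into one kernel-verified Lean document; each statement's English description precedes it below -/
import Mathlib

section
/- Let $H \in \mathbb{R}^{n\times n}$ be symmetric with $h_{ij} \leq 0$ for $i \neq j$, and let $r \in \mathbb{R}^n$ with $r_i > 0$ for all $i$. For positive $c \in \mathbb{R}^n$, define $F(c) = -\frac{1}{2} \sum_{i=1}^n \sum_{j \neq i} h_{ij} r_i r_j \frac{c_j}{c_i}$. Then $F(c) \geq F(\mathbf{1})$ for every positive vector $c$, where $\mathbf{1}$ is the all-ones vector. -/
theorem stmt_3 (n : ℕ) (H : Matrix (Fin n) (Fin n) ℝ) (hsym : H.IsSymm)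
    (hoff : ∀ i j, i ≠ j → H i j ≤ 0) (r : Fin n → ℝ) (hr : ∀ i, 0 < r i)
    (c : Fin n → ℝ) (hc : ∀ i, 0 < c i) :
    -(1/2) * ∑ i, ∑ j ∈ Finset.univ.erase i, H i j * r i * r j * (c j / c i) ≥
    -(1/2) * ∑ i, ∑ j ∈ Finset.univ.erase i, H i j * r i * r j * ((1:ℝ) / 1) := by
  set f : Fin n → Fin n → ℝ := fun i j => H i j * r i * r j * (c j / c i) with hf
  set g : Fin n → Fin n → ℝ := fun i j => H i j * r i * r j * ((1:ℝ)/1) with hg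
  have hswap : ∑ i, ∑ j ∈ Finset.univ.erase i, f j i
      = ∑ i, ∑ j ∈ Finset.univ.erase i, f i j := by
    rw [Finset.sum_comm' (s' := fun j => Finset.univ.erase j) (t' := Finset.univ)]
    intro i j
    simp [Finset.mem_erase, ne_comm]
  have hterm : ∀ i : Fin n, ∀ j ∈ Finset.univ.erase i, f i j + f j i ≤ 2 * g i j := by
    intro i j hj
    have hij : j ≠ i := (Finset.mem_erase.1 hj).1
    have hH : H i j ≤ 0 := hoff i j hij.symm
    have hHji : H j i = H i j := by
      have := hsym
      rw [Matrix.IsSymm] at this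
      calc H j i = H.transpose i j := rfl
        _ = H i j := by rw [this]
    have hb : H i j * r i * r j ≤ 0 := by
      have := mul_pos (hr i) (hr j)
      nlinarith
    have hx : (2:ℝ) ≤ c j / c i + c i / c j := by
      rw [div_add_div _ _ (ne_of_gt (hc i)) (ne_of_gt (hc j)),
        le_div_iff₀ (mul_pos (hc i) (hc j))]
      nlinarith [sq_nonneg (c i - c j)]
    simp only [hf, hg, hHji]
    nlinarith [mul_nonpos_of_nonpos_of_nonneg hb (by linarith : (0:ℝ) ≤ c j / c i + c i / c j - 2)]
  have hsum : ∑ i, ∑ j ∈ Finset.univ.erase i, f i j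
      ≤ ∑ i, ∑ j ∈ Finset.univ.erase i, g i j := by
    have h2 : (∑ i, ∑ j ∈ Finset.univ.erase i, f i j)
        + (∑ i, ∑ j ∈ Finset.univ.erase i, f j i)
        ≤ 2 * ∑ i, ∑ j ∈ Finset.univ.erase i, g i j := by
      rw [two_mul]
      have : ∀ i : Fin n, (∑ j ∈ Finset.univ.erase i, f i j)
          + (∑ j ∈ Finset.univ.erase i, f j i)
          ≤ (∑ j ∈ Finset.univ.erase i, g i j) + (∑ j ∈ Finset.univ.erase i, g i j) := by
        intro i
        rw [← Finset.sum_add_distrib, ← Finset.sum_add_distrib]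
        refine Finset.sum_le_sum fun j hj => ?_
        have := hterm i j hj
        linarith
      calc (∑ i, ∑ j ∈ Finset.univ.erase i, f i j)
            + (∑ i, ∑ j ∈ Finset.univ.erase i, f j i)
          = ∑ i, ((∑ j ∈ Finset.univ.erase i, f i j) + ∑ j ∈ Finset.univ.erase i, f j i) := by
            rw [Finset.sum_add_distrib]
        _ ≤ ∑ i, ((∑ j ∈ Finset.univ.erase i, g i j) + ∑ j ∈ Finset.univ.erase i, g i j) :=
            Finset.sum_le_sum fun i _ => this i
        _ = (∑ i, ∑ j ∈ Finset.univ.erase i, g i j)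
            + ∑ i, ∑ j ∈ Finset.univ.erase i, g i j := by rw [Finset.sum_add_distrib]
    rw [hswap] at h2
    linarith
  simp only [hf, hg] at hsum
  linarith
end

section
/- Let $H \in \mathbb{R}^{n\times n}$ be symmetric with $h_{ij} \leq 0$ for $i \neq j$, let $d > 0$, and define $\alpha_i = \max\{0, -\frac{1}{2}(h_{ii} + \sum_{j\neq i} h_{ij} d_j/d_i)\}$. Then the matrix $H + 2\,\mathrm{diag}(\alpha)$ is positive semidefinite. -/
theorem stmt_14 (n : ℕ) (H : Matrix (Fin n) (Fin n) ℝ) (hsym : H.IsSymm)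
    (hoff : ∀ i j, i ≠ j → H i j ≤ 0)
    (d : Fin n → ℝ) (hd : ∀ i, 0 < d i)
    (α : Fin n → ℝ)
    (hα : ∀ i, α i = max 0 (-(1/2) * (H i i + ∑ j ∈ Finset.univ.erase i, H i j * d j / d i))) :
    (H + 2 • Matrix.diagonal α).PosSemidef := by
  set M := H + 2 • Matrix.diagonal α with hM
  have hMoff : ∀ i j, i ≠ j → M i j = H i j := by
    intro i j hij
    simp only [hM, Matrix.add_apply, Matrix.smul_apply, Matrix.diagonal_apply_ne _ hij,
      smul_zero, add_zero]
  have hMdiag : ∀ i, M i i = H i i + 2 * α i := by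
    intro i
    show H i i + (2 • Matrix.diagonal α) i i = _
    rw [Matrix.smul_apply, Matrix.diagonal_apply_eq, two_nsmul]
    ring
  have hMsymm : ∀ i j, M i j = M j i := by
    intro i j
    rcases eq_or_ne i j with rfl | hij
    · rfl
    · rw [hMoff i j hij, hMoff j i hij.symm, ← hsym.apply i j]
  rw [Matrix.posSemidef_iff_dotProduct_mulVec]
  constructor
  · ext i j
    simp only [Matrix.conjTranspose_apply, star_trivial]
    exact hMsymm j i
  intro x
  have hexp : dotProduct (star x) (M.mulVec x) = ∑ i, ∑ j, x i * M i j * x j := by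
    simp [dotProduct, Matrix.mulVec, Finset.mul_sum, mul_assoc]
  rw [hexp]
  -- lower bound each off-diagonal term
  have hterm : ∀ i j, i ≠ j →
      M i j * (d j / (2 * d i) * x i ^ 2 + d i / (2 * d j) * x j ^ 2) ≤ x i * M i j * x j := by
    intro i j hij
    have hM0 : M i j ≤ 0 := (hMoff i j hij) ▸ hoff i j hij
    have hdi := hd i
    have hdj := hd j
    have hAM : x i * x j ≤ d j / (2 * d i) * x i ^ 2 + d i / (2 * d j) * x j ^ 2 := by
      rw [div_mul_eq_mul_div, div_mul_eq_mul_div, div_add_div _ _ (by positivity) (by positivity),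
        le_div_iff₀ (by positivity)]
      nlinarith [sq_nonneg (d j * x i - d i * x j), mul_pos hdi hdj]
    calc M i j * (d j / (2 * d i) * x i ^ 2 + d i / (2 * d j) * x j ^ 2)
        ≤ M i j * (x i * x j) := mul_le_mul_of_nonpos_left hAM hM0
      _ = x i * M i j * x j := by ring
  have hsum1 : ∀ i, x i * M i i * x i + ∑ j ∈ Finset.univ.erase i,
      M i j * (d j / (2 * d i) * x i ^ 2 + d i / (2 * d j) * x j ^ 2)
      ≤ ∑ j, x i * M i j * x j := by
    intro i
    rw [← Finset.add_sum_erase _ _ (Finset.mem_univ i)]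
    exact add_le_add_right (Finset.sum_le_sum fun j hj =>
      hterm i j (Finset.ne_of_mem_erase hj).symm) _
  have hlow : ∑ i, (x i * M i i * x i + ∑ j ∈ Finset.univ.erase i,
      M i j * (d j / (2 * d i) * x i ^ 2 + d i / (2 * d j) * x j ^ 2))
      ≤ ∑ i, ∑ j, x i * M i j * x j := Finset.sum_le_sum fun i _ => hsum1 i
  refine le_trans ?_ hlow
  -- rewrite the lower bound using symmetry
  have hswap : ∀ F : Fin n → Fin n → ℝ,
      (∑ i, ∑ j ∈ Finset.univ.erase i, F i j) = ∑ i, ∑ j ∈ Finset.univ.erase i, F j i := by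
    intro F
    have h1 : ∀ G : Fin n → Fin n → ℝ, (∑ i, ∑ j ∈ Finset.univ.erase i, G i j)
        = (∑ i, ∑ j, G i j) - ∑ i, G i i := by
      intro G
      rw [← Finset.sum_sub_distrib]
      refine Finset.sum_congr rfl fun i _ => ?_
      rw [eq_sub_iff_add_eq, add_comm, Finset.add_sum_erase _ _ (Finset.mem_univ i)]
    rw [h1, h1, Finset.sum_comm]
  have hsplit : ∑ i, (x i * M i i * x i + ∑ j ∈ Finset.univ.erase i,
      M i j * (d j / (2 * d i) * x i ^ 2 + d i / (2 * d j) * x j ^ 2))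
      = ∑ i, x i ^ 2 * (M i i + ∑ j ∈ Finset.univ.erase i, M i j * d j / d i) := by
    have e1 : ∑ i, ∑ j ∈ Finset.univ.erase i,
        M i j * (d j / (2 * d i) * x i ^ 2 + d i / (2 * d j) * x j ^ 2)
        = (∑ i, ∑ j ∈ Finset.univ.erase i, M i j * (d j / (2 * d i) * x i ^ 2))
        + ∑ i, ∑ j ∈ Finset.univ.erase i, M i j * (d i / (2 * d j) * x j ^ 2) := by
      rw [← Finset.sum_add_distrib]
      refine Finset.sum_congr rfl fun i _ => ?_
      rw [← Finset.sum_add_distrib]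
      exact Finset.sum_congr rfl fun j _ => by ring
    have e2 : ∑ i, ∑ j ∈ Finset.univ.erase i, M i j * (d i / (2 * d j) * x j ^ 2)
        = ∑ i, ∑ j ∈ Finset.univ.erase i, M i j * (d j / (2 * d i) * x i ^ 2) := by
      rw [hswap fun i j => M i j * (d j / (2 * d i) * x i ^ 2)]
      refine Finset.sum_congr rfl fun i _ => Finset.sum_congr rfl fun j _ => ?_
      rw [hMsymm j i]
    rw [Finset.sum_add_distrib, e1, e2, ← Finset.sum_add_distrib, ← Finset.sum_add_distrib]
    refine Finset.sum_congr rfl fun i _ => ?_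
    rw [mul_add, Finset.mul_sum, ← Finset.sum_add_distrib]
    congr 1
    · ring
    refine Finset.sum_congr rfl fun j hj => ?_
    have hdi : d i ≠ 0 := (hd i).ne'
    field_simp
    ring
  rw [hsplit]
  refine Finset.sum_nonneg fun i _ => ?_
  have hbr : 0 ≤ M i i + ∑ j ∈ Finset.univ.erase i, M i j * d j / d i := by
    have hMe : ∑ j ∈ Finset.univ.erase i, M i j * d j / d i
        = ∑ j ∈ Finset.univ.erase i, H i j * d j / d i := by
      refine Finset.sum_congr rfl fun j hj => ?_
      rw [hMoff i j (Finset.ne_of_mem_erase hj).symm]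
    have hαi : -(1/2) * (H i i + ∑ j ∈ Finset.univ.erase i, H i j * d j / d i) ≤ α i := by
      rw [hα i]; exact le_max_right _ _
    rw [hMdiag i, hMe]
    linarith
  positivity
end
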